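/- For the Hénon mapping F(x,y) = (x² + 9/32 - y/8, x), every point (x,y) ∈ ℂ² with |y| < (4/3)|x|² and |x| > 4 has unbounded forward orbit; in particular its orbit does not converge to the attractive fixed point (3/8, 3/8). Consequently, the basin of attraction of (3/8, 3/8) is not all of ℂ². -/
import Mathlib


open Filter

lemma henon_step (F : ℂ × ℂ → ℂ × ℂ)
    (hF : ∀ x y : ℂ, F (x, y) = (x ^ 2 + 9 / 32 - y / 8, x))
    (q : ℂ × ℂ) (h1 : ‖q.2‖ < (4 / 3) * ‖q.1‖ ^ 2) (h2 : ‖q.1‖ > 4) :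
    ‖(F q).2‖ < (4 / 3) * ‖(F q).1‖ ^ 2 ∧ ‖(F q).1‖ > 4 ∧ 2 * ‖q.1‖ ≤ ‖(F q).1‖ := by
  have hq : F q = (q.1 ^ 2 + 9 / 32 - q.2 / 8, q.1) := by
    rw [← hF q.1 q.2]
  rw [hq]
  set a := ‖q.1‖ with ha
  set b := ‖q.2‖ with hb
  have hb0 : 0 ≤ b := norm_nonneg _
  have key : a ^ 2 - 9 / 32 - b / 8 ≤ ‖q.1 ^ 2 + 9 / 32 - q.2 / 8‖ := by
    have h3 : ‖q.1 ^ 2‖ - ‖(9 : ℂ) / 32 - q.2 / 8‖ ≤ ‖q.1 ^ 2 + (9 / 32 - q.2 / 8)‖ := by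
      have := norm_sub_norm_le (q.1 ^ 2) (-((9 : ℂ) / 32 - q.2 / 8))
      rw [sub_neg_eq_add, norm_neg] at this
      exact this
    have h4 : ‖(9 : ℂ) / 32 - q.2 / 8‖ ≤ 9 / 32 + b / 8 := by
      have := norm_sub_le ((9 : ℂ) / 32) (q.2 / 8)
      have e1 : ‖(9 : ℂ) / 32‖ = 9 / 32 := by norm_num
      have e2 : ‖q.2 / 8‖ = b / 8 := by rw [norm_div]; norm_num [hb]
      rw [e1, e2] at this
      exact this
    have h5 : ‖q.1 ^ 2‖ = a ^ 2 := by rw [norm_pow]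
    have h6 : q.1 ^ 2 + 9 / 32 - q.2 / 8 = q.1 ^ 2 + (9 / 32 - q.2 / 8) := by ring
    rw [h6]
    linarith
  set c := ‖q.1 ^ 2 + 9 / 32 - q.2 / 8‖ with hc
  have hgrow : 2 * a ≤ c := by nlinarith
  have hc4 : c > 4 := by nlinarith
  refine ⟨?_, hc4, hgrow⟩
  show a < 4 / 3 * c ^ 2
  nlinarith

/-- For the Hénon mapping `F(x,y) = (x² + 9/32 - y/8, x)`, every point `(x,y)` with
`|y| < (4/3)|x|²` and `|x| > 4` has unbounded forward orbit; in particular its orbit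
does not converge to the attractive fixed point `(3/8, 3/8)`, and the basin of
attraction of `(3/8, 3/8)` is not all of `ℂ²`. -/
theorem stmt1
    (F : ℂ × ℂ → ℂ × ℂ)
    (hF : ∀ x y : ℂ, F (x, y) = (x ^ 2 + 9 / 32 - y / 8, x)) :
    (∀ p : ℂ × ℂ, ‖p.2‖ < (4 / 3) * ‖p.1‖ ^ 2 → ‖p.1‖ > 4 →
      (¬ ∃ M : ℝ, ∀ n : ℕ, ‖F^[n] p‖ ≤ M) ∧
      ¬ Tendsto (fun n : ℕ => F^[n] p) atTop (nhds ((3 : ℂ) / 8, (3 : ℂ) / 8))) ∧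
    {q : ℂ × ℂ | Tendsto (fun n : ℕ => F^[n] q) atTop (nhds ((3 : ℂ) / 8, (3 : ℂ) / 8))}
      ≠ Set.univ := by
  have main : ∀ p : ℂ × ℂ, ‖p.2‖ < (4 / 3) * ‖p.1‖ ^ 2 → ‖p.1‖ > 4 →
      (¬ ∃ M : ℝ, ∀ n : ℕ, ‖F^[n] p‖ ≤ M) ∧
      ¬ Tendsto (fun n : ℕ => F^[n] p) atTop (nhds ((3 : ℂ) / 8, (3 : ℂ) / 8)) := by
    intro p hp1 hp2
    have ind : ∀ n : ℕ, ‖(F^[n] p).2‖ < (4 / 3) * ‖(F^[n] p).1‖ ^ 2 ∧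
        ‖(F^[n] p).1‖ > 4 ∧ (2 : ℝ) ^ n * ‖p.1‖ ≤ ‖(F^[n] p).1‖ := by
      intro n
      induction n with
      | zero => simpa using ⟨hp1, hp2⟩
      | succ n ih =>
        obtain ⟨ih1, ih2, ih3⟩ := ih
        have := henon_step F hF (F^[n] p) ih1 ih2
        rw [Function.iterate_succ_apply']
        refine ⟨this.1, this.2.1, ?_⟩
        have h2 := this.2.2
        have hpow : (0 : ℝ) < (2 : ℝ) ^ n := by positivity
        calc (2 : ℝ) ^ (n + 1) * ‖p.1‖ = 2 * ((2 : ℝ) ^ n * ‖p.1‖) := by ring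
          _ ≤ 2 * ‖(F^[n] p).1‖ := by linarith
          _ ≤ ‖(F (F^[n] p)).1‖ := h2
    have unbdd : ¬ ∃ M : ℝ, ∀ n : ℕ, ‖F^[n] p‖ ≤ M := by
      rintro ⟨M, hM⟩
      obtain ⟨n, hn⟩ := pow_unbounded_of_one_lt (M / ‖p.1‖) (by norm_num : (1:ℝ) < 2)
      have hp1pos : (0 : ℝ) < ‖p.1‖ := by linarith
      have h1 : M < 2 ^ n * ‖p.1‖ := by
        rw [div_lt_iff₀ hp1pos] at hn; linarith
      have h2 := (ind n).2.2
      have h3 : ‖(F^[n] p).1‖ ≤ ‖F^[n] p‖ := norm_fst_le _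
      have := hM n
      linarith
    refine ⟨unbdd, fun htend => unbdd ?_⟩
    have hb : BddAbove (Set.range fun n : ℕ => ‖F^[n] p‖) :=
      (htend.norm).bddAbove_range
    obtain ⟨M, hM⟩ := hb
    exact ⟨M, fun n => hM (Set.mem_range_self n)⟩
  refine ⟨main, ?_⟩
  intro h
  have : ((5 : ℂ), (0 : ℂ)) ∈ {q : ℂ × ℂ | Tendsto (fun n : ℕ => F^[n] q) atTop
      (nhds ((3 : ℂ) / 8, (3 : ℂ) / 8))} := by rw [h]; trivial
  have h2 := main ((5 : ℂ), (0 : ℂ)) (by norm_num) (by norm_num)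
  exact h2.2 this
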